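/- Let A be a unital associative algebra over a commutative ring k and let N₁, N₂ be A-sub-bimodules of A² = ker m. If the first-order differential calculi (A²/N₁, π₁ ∘ D) and (A²/N₂, π₂ ∘ D) are isomorphic (i.e. there is an A-bimodule isomorphism iso : A²/N₁ → A²/N₂ with iso ∘ π₁ ∘ D = π₂ ∘ D), then N₁ = N₂. -/
import Mathlib


/- Isomorphic quotient calculi have equal defining sub-bimodules: if
(A²/N₁, π₁ ∘ D) ≅ (A²/N₂, π₂ ∘ D) as first-order differential calculi,
then N₁ = N₂. -/

open TensorProduct

/-- The multiplication map `m : A ⊗[k] A → A`. -/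
noncomputable def mulMap (k A : Type*) [CommRing k] [Ring A] [Algebra k A] :
    A ⊗[k] A →ₗ[k] A := LinearMap.mul' k A

/-- The universal differential `D b = 1 ⊗ b − b ⊗ 1`. -/
noncomputable def Duniv (k A : Type*) [CommRing k] [Ring A] [Algebra k A] (b : A) :
    A ⊗[k] A := (1 : A) ⊗ₜ[k] b - b ⊗ₜ[k] (1 : A)

section Lemmas
variable (k A : Type*) [CommRing k] [Ring A] [Algebra k A]

lemma mulMap_leftMul (c : A) (x : A ⊗[k] A) :
    mulMap k A ((c ⊗ₜ[k] (1 : A)) * x) = c * mulMap k A x := by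
  induction x using TensorProduct.induction_on with
  | zero => simp
  | tmul a b =>
      simp [mulMap, Algebra.TensorProduct.tmul_mul_tmul, LinearMap.mul'_apply, mul_assoc]
  | add x y hx hy => simp [mul_add, hx, hy]

lemma mulMap_rightMul (c : A) (x : A ⊗[k] A) :
    mulMap k A (x * ((1 : A) ⊗ₜ[k] c)) = mulMap k A x * c := by
  induction x using TensorProduct.induction_on with
  | zero => simp
  | tmul a b =>
      simp [mulMap, Algebra.TensorProduct.tmul_mul_tmul, LinearMap.mul'_apply, mul_assoc]
  | add x y hx hy => simp [add_mul, hx, hy]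

lemma Duniv_mem (b : A) : Duniv k A b ∈ LinearMap.ker (mulMap k A) := by
  simp [Duniv, mulMap, LinearMap.mem_ker, map_sub, LinearMap.mul'_apply]

/-- The left `A`-action `c·x = (c ⊗ 1) * x` on `A² = ker m`. -/
noncomputable def actL (c : A) (x : LinearMap.ker (mulMap k A)) :
    LinearMap.ker (mulMap k A) :=
  ⟨(c ⊗ₜ[k] (1 : A)) * (x : A ⊗[k] A), by
    have hx := x.2
    rw [LinearMap.mem_ker] at hx ⊢
    rw [mulMap_leftMul, hx, mul_zero]⟩

/-- The right `A`-action `x·c = x * (1 ⊗ c)` on `A² = ker m`. -/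
noncomputable def actR (c : A) (x : LinearMap.ker (mulMap k A)) :
    LinearMap.ker (mulMap k A) :=
  ⟨(x : A ⊗[k] A) * ((1 : A) ⊗ₜ[k] c), by
    have hx := x.2
    rw [LinearMap.mem_ker] at hx ⊢
    rw [mulMap_rightMul, hx, zero_mul]⟩

end Lemmas

section Aux
variable (k A : Type*) [CommRing k] [Ring A] [Algebra k A]

lemma actL_Duniv (a b : A) :
    (actL k A a ⟨Duniv k A b, Duniv_mem k A b⟩ : A ⊗[k] A)
      = a ⊗ₜ[k] b - (a * b) ⊗ₜ[k] (1 : A) := by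
  simp [actL, Duniv, mul_sub, Algebra.TensorProduct.tmul_mul_tmul]

lemma span_ker (x : A ⊗[k] A) (hx : x ∈ LinearMap.ker (mulMap k A)) :
    x ∈ Submodule.span k {y : A ⊗[k] A | ∃ a b : A,
      y = a ⊗ₜ[k] b - (a * b) ⊗ₜ[k] (1 : A)} := by
  have key : ∀ z : A ⊗[k] A, z - (mulMap k A z) ⊗ₜ[k] (1 : A) ∈
      Submodule.span k {y : A ⊗[k] A | ∃ a b : A,
        y = a ⊗ₜ[k] b - (a * b) ⊗ₜ[k] (1 : A)} := by
    intro z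
    induction z using TensorProduct.induction_on with
    | zero => simp
    | tmul a b =>
        exact Submodule.subset_span ⟨a, b, by simp [mulMap, LinearMap.mul'_apply]⟩
    | add x y hx hy =>
        have := Submodule.add_mem _ hx hy
        convert this using 1
        rw [map_add, add_tmul]
        abel
  have := key x
  rw [LinearMap.mem_ker] at hx
  simpa [hx] using this

end Aux

/-- If `N₁, N₂` are `A`-sub-bimodules of `A² = ker m` and the
first-order differential calculi `(A²/N₁, π₁ ∘ D)` and `(A²/N₂, π₂ ∘ D)` are
isomorphic — i.e. there is an `A`-bimodule isomorphism
`iso : A²/N₁ → A²/N₂` with `iso ∘ π₁ ∘ D = π₂ ∘ D` (compatibility with the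
induced bimodule actions being expressed via representatives) — then `N₁ = N₂`. -/
theorem iso_fodc_eq_subbimodule (k A : Type*) [CommRing k] [Ring A] [Algebra k A]
    (N₁ N₂ : Submodule k (A ⊗[k] A))
    (hN₁ker : N₁ ≤ LinearMap.ker (mulMap k A))
    (hN₁left : ∀ c : A, ∀ x ∈ N₁, (c ⊗ₜ[k] (1 : A)) * x ∈ N₁)
    (hN₁right : ∀ c : A, ∀ x ∈ N₁, x * ((1 : A) ⊗ₜ[k] c) ∈ N₁)
    (hN₂ker : N₂ ≤ LinearMap.ker (mulMap k A))
    (hN₂left : ∀ c : A, ∀ x ∈ N₂, (c ⊗ₜ[k] (1 : A)) * x ∈ N₂)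
    (hN₂right : ∀ c : A, ∀ x ∈ N₂, x * ((1 : A) ⊗ₜ[k] c) ∈ N₂)
    (iso : ((LinearMap.ker (mulMap k A)) ⧸
        (N₁.comap (LinearMap.ker (mulMap k A)).subtype)) ≃ₗ[k]
      ((LinearMap.ker (mulMap k A)) ⧸
        (N₂.comap (LinearMap.ker (mulMap k A)).subtype)))
    (hisoD : ∀ a : A,
      iso (Submodule.Quotient.mk ⟨Duniv k A a, Duniv_mem k A a⟩) =
        Submodule.Quotient.mk ⟨Duniv k A a, Duniv_mem k A a⟩)
    (hisoL : ∀ (c : A) (x y : LinearMap.ker (mulMap k A)),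
      iso (Submodule.Quotient.mk x) = Submodule.Quotient.mk y →
      iso (Submodule.Quotient.mk (actL k A c x)) =
        Submodule.Quotient.mk (actL k A c y))
    (hisoR : ∀ (c : A) (x y : LinearMap.ker (mulMap k A)),
      iso (Submodule.Quotient.mk x) = Submodule.Quotient.mk y →
      iso (Submodule.Quotient.mk (actR k A c x)) =
        Submodule.Quotient.mk (actR k A c y)) :
    N₁ = N₂ := by
  let K := LinearMap.ker (mulMap k A)
  let Q₁ := N₁.comap K.subtype
  let Q₂ := N₂.comap K.subtype
  -- the two linear maps K → (K ⧸ Q₂)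
  set f : K →ₗ[k] (K ⧸ Q₂) := iso.toLinearMap ∘ₗ Q₁.mkQ with hf
  set g : K →ₗ[k] (K ⧸ Q₂) := Q₂.mkQ with hg
  -- generators inside K
  set S : Set K := {x : K | ∃ a b : A, x = actL k A a ⟨Duniv k A b, Duniv_mem k A b⟩}
    with hS
  have hfg : Set.EqOn f g S := by
    rintro x ⟨a, b, rfl⟩
    have h := hisoL a _ _ (hisoD b)
    simpa [hf, hg, Submodule.mkQ_apply] using h
  have hspan : ∀ x : K, x ∈ Submodule.span k S := by
    intro x
    have hx := x.2
    have hmem := span_ker k A (x : A ⊗[k] A) hx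
    -- relate spans via the subtype map
    have himg : (Submodule.span k S).map K.subtype =
        Submodule.span k {y : A ⊗[k] A | ∃ a b : A,
          y = a ⊗ₜ[k] b - (a * b) ⊗ₜ[k] (1 : A)} := by
      rw [Submodule.map_span]
      congr 1
      ext y
      constructor
      · rintro ⟨z, ⟨a, b, rfl⟩, rfl⟩
        exact ⟨a, b, (actL_Duniv k A a b).symm ▸ rfl⟩
      · rintro ⟨a, b, rfl⟩
        exact ⟨actL k A a ⟨Duniv k A b, Duniv_mem k A b⟩, ⟨a, b, rfl⟩,
          actL_Duniv k A a b⟩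
    rw [← himg] at hmem
    obtain ⟨z, hz, hzx⟩ := hmem
    have : z = x := Subtype.ext hzx
    exact this ▸ hz
  have key : ∀ x : K, iso (Submodule.Quotient.mk x) = Submodule.Quotient.mk x := by
    intro x
    have := LinearMap.eqOn_span hfg (hspan x)
    simpa [hf, hg, Submodule.mkQ_apply] using this
  ext x
  constructor
  · intro hx1
    have hxk : x ∈ K := hN₁ker hx1
    have h0 : (Submodule.Quotient.mk (⟨x, hxk⟩ : K) : K ⧸ Q₁) = 0 := by
      rw [Submodule.Quotient.mk_eq_zero]
      exact Submodule.mem_comap.mpr hx1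
    have := key ⟨x, hxk⟩
    rw [h0, map_zero] at this
    exact Submodule.mem_comap.mp ((Submodule.Quotient.mk_eq_zero _).mp this.symm)
  · intro hx2
    have hxk : x ∈ K := hN₂ker hx2
    have h0 : (Submodule.Quotient.mk (⟨x, hxk⟩ : K) : K ⧸ Q₂) = 0 := by
      rw [Submodule.Quotient.mk_eq_zero]
      exact Submodule.mem_comap.mpr hx2
    have := key ⟨x, hxk⟩
    rw [h0] at this
    have h1 : (Submodule.Quotient.mk (⟨x, hxk⟩ : K) : K ⧸ Q₁) = 0 := by
      apply iso.injective
      rw [this, map_zero]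
    exact Submodule.mem_comap.mp ((Submodule.Quotient.mk_eq_zero _).mp h1)
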